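/- If N is a normal subgroup of a finite group G, then Pr(G) ≤ Pr(N) · Pr(G/N). -/

import Mathlib

open QuotientGroup

private lemma card_commPairs_le (G : Type*) [Group G] [Finite G] (N : Subgroup G) [N.Normal] :
    Nat.card { p : G × G // Commute p.1 p.2 } ≤
      Nat.card { p : N × N // Commute p.1 p.2 } *
        Nat.card { p : (G ⧸ N) × (G ⧸ N) // Commute p.1 p.2 } := by
  classical
  set c : G → G ⧸ N → G := fun y q =>
    if h : ∃ z : G, Commute z y ∧ (QuotientGroup.mk z : G ⧸ N) = q then h.choose else 1 with hc
  have hcspec : ∀ (y : G) (q : G ⧸ N) (h : ∃ z : G, Commute z y ∧ (QuotientGroup.mk z : G ⧸ N) = q),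
      Commute (c y q) y ∧ (QuotientGroup.mk (c y q) : G ⧸ N) = q := by
    intro y q h
    simp only [hc, dif_pos h]
    exact h.choose_spec
  -- build the injection
  have key : ∀ p : { p : G × G // Commute p.1 p.2 },
      ∃ mn : { p : N × N // Commute p.1 p.2 },
        ((c p.1.2 (QuotientGroup.mk p.1.1) : G) * (mn.1.1 : G) = p.1.1) ∧
        ((c (mn.1.1 : G) (QuotientGroup.mk p.1.2) : G) * (mn.1.2 : G) = p.1.2) := by
    rintro ⟨⟨x, y⟩, hxy⟩
    have h1 : ∃ z : G, Commute z y ∧ (QuotientGroup.mk z : G ⧸ N) = QuotientGroup.mk x := ⟨x, hxy, rfl⟩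
    obtain ⟨hz1, hz2⟩ := hcspec y (QuotientGroup.mk x) h1
    set z := c y (QuotientGroup.mk x)
    have hmN : z⁻¹ * x ∈ N := by
      have : (QuotientGroup.mk (z⁻¹ * x) : G ⧸ N) = 1 := by
        rw [QuotientGroup.mk_mul, QuotientGroup.mk_inv, hz2, inv_mul_cancel]
      exact (QuotientGroup.eq_one_iff _).mp this
    have hmy : Commute (z⁻¹ * x) y := (hz1.inv_left).mul_left hxy
    have h2 : ∃ w : G, Commute w (z⁻¹ * x) ∧ (QuotientGroup.mk w : G ⧸ N) = QuotientGroup.mk y :=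
      ⟨y, hmy.symm, rfl⟩
    obtain ⟨hw1, hw2⟩ := hcspec (z⁻¹ * x) (QuotientGroup.mk y) h2
    set w := c (z⁻¹ * x) (QuotientGroup.mk y)
    have hyN : w⁻¹ * y ∈ N := by
      have : (QuotientGroup.mk (w⁻¹ * y) : G ⧸ N) = 1 := by
        rw [QuotientGroup.mk_mul, QuotientGroup.mk_inv, hw2, inv_mul_cancel]
      exact (QuotientGroup.eq_one_iff _).mp this
    have hcomm : Commute ((⟨z⁻¹ * x, hmN⟩ : N)) ((⟨w⁻¹ * y, hyN⟩ : N)) := by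
      have : Commute (z⁻¹ * x) (w⁻¹ * y) := (hw1.symm.inv_right).mul_right hmy
      exact Subtype.ext this
    exact ⟨⟨(⟨z⁻¹ * x, hmN⟩, ⟨w⁻¹ * y, hyN⟩), hcomm⟩, by simp, mul_inv_cancel_left w y⟩
  choose F hF1 hF2 using key
  have hQ : ∀ p : { p : G × G // Commute p.1 p.2 },
      Commute (QuotientGroup.mk p.1.1 : G ⧸ N) (QuotientGroup.mk p.1.2) := by
    rintro ⟨⟨x, y⟩, hxy⟩
    exact congrArg QuotientGroup.mk hxy
  have hinj : Function.Injective
      (fun p : { p : G × G // Commute p.1 p.2 } =>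
        ((F p, ⟨(QuotientGroup.mk p.1.1, QuotientGroup.mk p.1.2), hQ p⟩) :
          { p : N × N // Commute p.1 p.2 } ×
          { p : (G ⧸ N) × (G ⧸ N) // Commute p.1 p.2 })) := by
    intro p q h
    simp only [Prod.mk.injEq, Subtype.mk.injEq, Prod.mk.injEq] at h
    obtain ⟨hF, hx, hy⟩ := h
    have h1 := hF1 p
    have h2 := hF2 p
    have h3 := hF1 q
    have h4 := hF2 q
    rw [hF, hy] at h2
    have hyeq : p.1.2 = q.1.2 := h2.symm.trans h4
    rw [hF, hx, hyeq] at h1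
    have hxeq : p.1.1 = q.1.1 := h1.symm.trans h3
    exact Subtype.ext (Prod.ext hxeq hyeq)
  calc Nat.card { p : G × G // Commute p.1 p.2 }
      ≤ Nat.card ({ p : N × N // Commute p.1 p.2 } ×
          { p : (G ⧸ N) × (G ⧸ N) // Commute p.1 p.2 }) := Nat.card_le_card_of_injective _ hinj
    _ = _ := Nat.card_prod _ _

theorem commProb_le_mul_quotient (G : Type*) [Group G] [Finite G] (N : Subgroup G) [N.Normal] :
    commProb G ≤ commProb N * commProb (G ⧸ N) := by
  rw [commProb_def, commProb_def, commProb_def, div_mul_div_comm,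
    Subgroup.card_eq_card_quotient_mul_card_subgroup N]
  have hle := card_commPairs_le G N
  have hN : (0 : ℚ) < (Nat.card N : ℚ) := by
    exact_mod_cast Nat.pos_of_ne_zero (Nat.card_pos).ne'
  have hQ : (0 : ℚ) < (Nat.card (G ⧸ N) : ℚ) := by
    exact_mod_cast Nat.pos_of_ne_zero (Nat.card_pos).ne'
  rw [Nat.cast_mul, mul_pow]
  rw [show ((Nat.card (G ⧸ N) : ℚ)) ^ 2 * (Nat.card N : ℚ) ^ 2
      = (Nat.card N : ℚ) ^ 2 * (Nat.card (G ⧸ N) : ℚ) ^ 2 from mul_comm _ _]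
  apply div_le_div_of_nonneg_right ?_ ?_ |>.trans_eq rfl
  · exact_mod_cast hle
  · positivity
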